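/- arXiv:2201.03642 — 5 statements merged into one kernel-verified Lean document; each statement's English description precedes it below -/
import Mathlib

section
/- For any finite simple graph G on n vertices, χ(G) + χ(G^c) ≤ n + 1, where G^c is the complement of G. -/
open SimpleGraph Finset

lemma my_induce_compl {V : Type*} (G : SimpleGraph V) (s : Set V) :
    (G.induce s)ᶜ = Gᶜ.induce s := by
  ext a b
  simp [Subtype.ext_iff, and_comm]

lemma my_colorable_succ {V : Type*} [DecidableEq V] (G : SimpleGraph V) (v : V) {a : ℕ}
    (h : (G.induce {v}ᶜ).Colorable a) : G.Colorable (a + 1) := by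
  obtain ⟨C⟩ := h
  refine ⟨SimpleGraph.Coloring.mk
    (fun w => if hw : w = v then Fin.last a else (C ⟨w, hw⟩).castSucc) ?_⟩
  intro x y hxy
  by_cases hx : x = v <;> by_cases hy : y = v
  · exact absurd hxy (by simp [hx, hy])
  · simp only [hx, hy, dif_pos, dif_neg, not_false_iff]
    exact fun hEq => (Fin.castSucc_lt_last _).ne' hEq
  · simp only [hx, hy, dif_pos, dif_neg, not_false_iff]
    exact fun hEq => (Fin.castSucc_lt_last _).ne hEq
  · simp only [hx, hy, dif_neg, not_false_iff]
    intro hEq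
    exact C.valid (by exact hxy : (G.induce {v}ᶜ).Adj ⟨x, hx⟩ ⟨y, hy⟩)
      (Fin.castSucc_injective _ hEq)

lemma my_colorable_greedy {V : Type*} [Fintype V] [DecidableEq V] (G : SimpleGraph V)
    [DecidableRel G.Adj] (v : V) {a : ℕ}
    (h : (G.induce {v}ᶜ).Colorable a) (hd : G.degree v < a) : G.Colorable a := by
  classical
  obtain ⟨C⟩ := h
  set S : Finset (Fin a) := (G.neighborFinset v).attach.image
    (fun w => C ⟨w.1, Set.mem_compl_singleton_iff.mpr
      (G.ne_of_adj ((G.mem_neighborFinset v w.1).mp w.2)).symm⟩) with hSdef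
  have hS : S.card < Fintype.card (Fin a) := by
    calc S.card ≤ (G.neighborFinset v).attach.card := card_image_le
    _ = G.degree v := by rw [Finset.card_attach]; rfl
    _ < Fintype.card (Fin a) := by simpa using hd
  have hcpos : 0 < Sᶜ.card := by
    rw [Finset.card_compl]
    omega
  obtain ⟨c, hc⟩ := Finset.card_pos.mp hcpos
  rw [Finset.mem_compl] at hc
  refine ⟨SimpleGraph.Coloring.mk
    (fun w => if hw : w = v then c else C ⟨w, hw⟩) ?_⟩
  intro x y hxy
  by_cases hx : x = v <;> by_cases hy : y = v
  · exact absurd hxy (by simp [hx, hy])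
  · simp only [hx, hy, dif_pos, dif_neg, not_false_iff]
    intro hEq
    apply hc
    rw [hSdef]
    have hyv : y ∈ G.neighborFinset v := (G.mem_neighborFinset v y).mpr (hx ▸ hxy)
    exact Finset.mem_image.mpr ⟨⟨y, hyv⟩, Finset.mem_attach _ _, hEq.symm⟩
  · simp only [hx, hy, dif_pos, dif_neg, not_false_iff]
    intro hEq
    apply hc
    rw [hSdef]
    have hxv : x ∈ G.neighborFinset v := (G.mem_neighborFinset v x).mpr (hy ▸ hxy.symm)
    exact Finset.mem_image.mpr ⟨⟨x, hxv⟩, Finset.mem_attach _ _, hEq⟩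
  · simp only [hx, hy, dif_neg, not_false_iff]
    exact C.valid (by exact hxy : (G.induce {v}ᶜ).Adj ⟨x, hx⟩ ⟨y, hy⟩)

lemma my_key : ∀ (n : ℕ) {V : Type*} [Fintype V] (G : SimpleGraph V),
    Fintype.card V = n → ∃ a b, G.Colorable a ∧ Gᶜ.Colorable b ∧ a + b ≤ n + 1 := by
  intro n
  induction n with
  | zero =>
    intro V _ G hn
    have : IsEmpty V := Fintype.card_eq_zero_iff.mp hn
    exact ⟨0, 0, Colorable.of_isEmpty (G := G) 0, Colorable.of_isEmpty (G := Gᶜ) 0, by omega⟩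
  | succ n ih =>
    intro V _ G hn
    classical
    have : Nonempty V := Fintype.card_pos_iff.mp (by omega)
    obtain ⟨v⟩ := this
    have hcard : Fintype.card ({v}ᶜ : Set V) = n := by
      rw [Fintype.card_compl_set]
      simp [hn]
    obtain ⟨a, b, ha, hb, hab⟩ := ih (G.induce {v}ᶜ) hcard
    rw [my_induce_compl] at hb
    have hext_a : G.Colorable (a + 1) := my_colorable_succ G v ha
    have hext_b : Gᶜ.Colorable (b + 1) := my_colorable_succ Gᶜ v hb
    by_cases hda : G.degree v < a
    · exact ⟨a, b + 1, my_colorable_greedy G v ha hda, hext_b, by omega⟩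
    by_cases hdb : Gᶜ.degree v < b
    · exact ⟨a + 1, b, hext_a, my_colorable_greedy Gᶜ v hb hdb, by omega⟩
    · -- a ≤ deg v, b ≤ deg' v, deg + deg' = n
      have hdc : Gᶜ.degree v = Fintype.card V - 1 - G.degree v := G.degree_compl v
      have hdle : G.degree v ≤ Fintype.card V - 1 := by
        have := G.degree_lt_card_verts v
        omega
      have : a + b ≤ n := by
        rw [hn] at hdc hdle
        omega
      exact ⟨a + 1, b + 1, hext_a, hext_b, by omega⟩

theorem stmt1 {V : Type*} [Fintype V] (G : SimpleGraph V) :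
    G.chromaticNumber + Gᶜ.chromaticNumber ≤ (Fintype.card V : ℕ∞) + 1 := by
  obtain ⟨a, b, ha, hb, hab⟩ := my_key (Fintype.card V) G rfl
  calc G.chromaticNumber + Gᶜ.chromaticNumber ≤ (a : ℕ∞) + (b : ℕ∞) :=
        add_le_add ha.chromaticNumber_le hb.chromaticNumber_le
    _ ≤ (Fintype.card V : ℕ∞) + 1 := by
        rw [← Nat.cast_add, ← Nat.cast_one, ← Nat.cast_add]
        exact_mod_cast hab
end

section
/- Let G be a graph of order n and S ⊆ V(G) an independent set with |S| = k + 1. If χ(G) ≥ n − k, then the induced subgraph G[V(G) − S] is complete. -/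
theorem stmt3 {V : Type*} [Fintype V] [DecidableEq V] (G : SimpleGraph V) (k : ℕ)
    (S : Finset V) (hcard : S.card = k + 1)
    (hind : (S : Set V).Pairwise fun a b => ¬ G.Adj a b)
    (hchi : ((Fintype.card V - k : ℕ) : ℕ∞) ≤ G.chromaticNumber) :
    ∀ x y : V, x ∉ S → y ∉ S → x ≠ y → G.Adj x y := by
  intro x y hx hy hxy
  by_contra hadj
  obtain ⟨s0, hs0⟩ : ∃ s, s ∈ S := Finset.card_pos.mp (by omega)
  have hn : k + 1 ≤ Fintype.card V := hcard ▸ Finset.card_le_univ S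
  -- color set
  set C : Finset V := Finset.univ \ (insert y (S.erase s0)) with hC
  have hyS : y ∉ S.erase s0 := fun h => hy (Finset.mem_of_mem_erase h)
  have hCcard : C.card = Fintype.card V - (k + 1) := by
    rw [hC, Finset.card_sdiff_of_subset (Finset.subset_univ _), Finset.card_insert_of_notMem hyS,
      Finset.card_erase_of_mem hs0, hcard, Finset.card_univ]
    omega
  -- the coloring function
  set f : V → V := fun v => if v ∈ S then s0 else if v = y then x else v with hf
  have hmem : ∀ v, f v ∈ C := by
    intro v
    simp only [hC, Finset.mem_sdiff, Finset.mem_univ, true_and, Finset.mem_insert,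
      Finset.mem_erase]
    push_neg
    simp only [hf]
    split_ifs with h1 h2
    · exact ⟨fun h => hy (h ▸ hs0), fun h => absurd rfl h⟩
    · exact ⟨hxy, fun _ => hx⟩
    · exact ⟨h2, fun _ => h1⟩
  have hvalid : ∀ {a b : V}, G.Adj a b → f a ≠ f b := by
    intro a b hab hfab
    simp only [hf] at hfab
    by_cases h1 : a ∈ S <;> by_cases h2 : b ∈ S
    · exact hind (by simpa using h1) (by simpa using h2) hab.ne hab
    · rw [if_pos h1, if_neg h2] at hfab
      by_cases hb : b = y
      · rw [if_pos hb] at hfab; exact hx (hfab ▸ hs0)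
      · rw [if_neg hb] at hfab; exact h2 (hfab ▸ hs0)
    · rw [if_neg h1, if_pos h2] at hfab
      by_cases ha : a = y
      · rw [if_pos ha] at hfab; exact hx (hfab.symm ▸ hs0)
      · rw [if_neg ha] at hfab; exact h1 (hfab.symm ▸ hs0)
    · rw [if_neg h1, if_neg h2] at hfab
      by_cases ha : a = y <;> by_cases hb : b = y
      · exact hab.ne (ha.trans hb.symm)
      · rw [if_pos ha, if_neg hb] at hfab
        subst ha; subst hfab; exact hadj hab.symm
      · rw [if_neg ha, if_pos hb] at hfab
        subst hb; subst hfab; exact hadj hab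
      · rw [if_neg ha, if_neg hb] at hfab
        exact hab.ne hfab
  let col : G.Coloring {v // v ∈ C} :=
    SimpleGraph.Coloring.mk (fun v => ⟨f v, hmem v⟩)
      (fun hab h => hvalid hab (congrArg Subtype.val h))
  have hcol : G.Colorable (Fintype.card V - (k + 1)) := by
    have := col.colorable
    rwa [Fintype.card_coe, hCcard] at this
  have hle : G.chromaticNumber ≤ (Fintype.card V - (k + 1) : ℕ) :=
    hcol.chromaticNumber_le
  have := hchi.trans hle
  rw [Nat.cast_le] at this
  omega
end

section
/- Let C be a longest cycle in a graph G with a fixed orientation, let x₀ be a vertex not on C, and let u₁, ..., u_s be the endpoints on C of s internally disjoint paths from x₀ to C that intersect C only in their endpoints. Then the set {x₀, u₁⁺, u₂⁺, ..., u_s⁺} is an independent set in G, where uᵢ⁺ denotes the successor of uᵢ along the orientation of C. -/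
open SimpleGraph

open SimpleGraph

lemma my_next_getLast {α : Type*} [DecidableEq α] {l : List α} (hl : l ≠ []) (hnd : l.Nodup)
    {x : α} (hx : x = l.getLast hl) (hmem : x ∈ l) : l.next x hmem = l.head hl := by
  subst hx
  have hn : 0 < l.length := List.length_pos_iff.2 hl
  have h1 : l.getLast hl = l.get ⟨l.length - 1, by omega⟩ := by
    simp [List.getLast_eq_getElem]
  simp only [h1]
  simp only [List.get_eq_getElem]
  rw [List.next_getElem l hnd _ (by omega)]
  have : (l.length - 1 + 1) % l.length = 0 := by
    have : l.length - 1 + 1 = l.length := by omega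
    simp [this]
  simp only [this]
  simp [List.get_mk_zero, List.head_eq_getElem]

lemma my_next_append {α : Type*} [DecidableEq α] {l₁ l₂ : List α} (h₁ : l₁ ≠ []) (h₂ : l₂ ≠ [])
    (hnd : (l₁ ++ l₂).Nodup) {x : α} (hx : x = l₁.getLast h₁) (hmem : x ∈ l₁ ++ l₂) :
    (l₁ ++ l₂).next x hmem = l₂.head h₂ := by
  subst hx
  have hn₁ : 0 < l₁.length := List.length_pos_iff.2 h₁
  have hn₂ : 0 < l₂.length := List.length_pos_iff.2 h₂
  have h1 : l₁.getLast h₁ = (l₁ ++ l₂).get ⟨l₁.length - 1, by simp; omega⟩ := by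
    rw [List.getLast_eq_getElem]
    simp only [List.get_eq_getElem]
    rw [List.getElem_append_left (by omega)]
  simp only [h1]
  simp only [List.get_eq_getElem]
  rw [List.next_getElem _ hnd _ (by simp; omega)]
  have hmod : (l₁.length - 1 + 1) % (l₁.length + l₂.length) = l₁.length := by
    rw [show l₁.length - 1 + 1 = l₁.length by omega]
    exact Nat.mod_eq_of_lt (by omega)
  simp only [List.get_eq_getElem, List.length_append, hmod]
  rw [List.getElem_append_right (by omega)]
  simp [List.head_eq_getElem]

lemma walk_exists_cons {V : Type*} {G : SimpleGraph V} {a b : V} (p : G.Walk a b) (hp : a ≠ b ∨ ¬ p.Nil) :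
    ∃ (c : V) (h : G.Adj a c) (q : G.Walk c b), p = Walk.cons h q := by
  cases p with
  | nil => simp at hp
  | cons h q => exact ⟨_, h, q, rfl⟩

lemma cycle_succ_decomp {V : Type*} [DecidableEq V] {G : SimpleGraph V} {v x : V}
    (C : G.Walk v v) (hC : C.IsCycle) (hx : x ∈ C.support.tail) :
    ∃ (y : V) (h : G.Adj x y) (q : G.Walk y x),
      (Walk.cons h q).IsCycle ∧ (Walk.cons h q).length = C.length ∧
      q.support ~r C.support.tail ∧ C.support.tail.next x hx = y := by
  have hx' : x ∈ C.support := List.mem_of_mem_tail hx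
  have hD : (C.rotate x hx').IsCycle := hC.rotate hx'
  have hrot : (C.rotate x hx').support.tail ~r C.support.tail := C.support_rotate x hx'
  have hlen : (C.rotate x hx').length = C.length := by
    have h2 := congrArg Walk.length (C.take_spec hx')
    rw [Walk.length_append] at h2
    rw [Walk.rotate, Walk.length_append]
    omega
  obtain ⟨y, h, q, hq⟩ := walk_exists_cons (C.rotate x hx') (Or.inr hD.not_nil)
  rw [hq] at hD hrot hlen
  have hqs : (Walk.cons h q).support.tail = q.support := by simp
  rw [hqs] at hrot
  refine ⟨y, h, q, hD, by simpa using hlen, hrot, ?_⟩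
  have hnd : C.support.tail.Nodup := hC.support_nodup
  rw [List.isRotated_next_eq hrot.symm hnd hx]
  rw [my_next_getLast (q.support_ne_nil) (hrot.nodup_iff.mpr hnd) (q.getLast_support).symm]
  exact q.head_support

lemma keyA {V : Type*} [DecidableEq V] {G : SimpleGraph V} {v x0 w : V}
    (C : G.Walk v v) (hC : C.IsCycle)
    (hlong : ∀ (a : V) (D : G.Walk a a), D.IsCycle → D.length ≤ C.length)
    (hx0 : x0 ∉ C.support) (hw : w ∈ C.support.tail)
    (P : G.Walk x0 w) (hP : P.IsPath)
    (hmeet : ∀ y ∈ P.support, y ∈ C.support → y = w) :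
    ¬ G.Adj x0 (C.support.tail.next w hw) := by
  intro hadj
  obtain ⟨y, hwy, q, hcyc, hlen, hrotq, hnext⟩ := cycle_succ_decomp C hC hw
  rw [hnext] at hadj
  have hsubC : ∀ z ∈ q.support, z ∈ C.support := fun z hz =>
    List.mem_of_mem_tail (hrotq.mem_iff.mp hz)
  have hqnd : q.support.Nodup := hrotq.nodup_iff.mpr hC.support_nodup
  have hWc : (Walk.cons hadj (q.append P.reverse)).IsCycle := by
    rw [Walk.cons_isCycle_iff]
    refine ⟨?_, ?_⟩
    · rw [Walk.isPath_def, Walk.support_append, List.nodup_append']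
      refine ⟨hqnd, (hP.reverse.support_nodup).sublist (List.tail_sublist _), ?_⟩
      intro z hz hz'
      have hzC := hsubC z hz
      have hzP : z ∈ P.support := by
        have : z ∈ P.reverse.support := List.mem_of_mem_tail hz'
        simpa [Walk.support_reverse] using this
      have hzw := hmeet z hzP hzC
      subst hzw
      have hnd : P.reverse.support.Nodup := hP.reverse.support_nodup
      rw [P.reverse.support_eq_cons, List.nodup_cons] at hnd
      exact hnd.1 hz'
    · intro he
      rw [Walk.edges_append, List.mem_append] at he
      cases he with
      | inl h1 => exact hx0 (hsubC _ (Walk.fst_mem_support_of_mem_edges q h1))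
      | inr h2 =>
        have hy : y ∈ P.reverse.support := Walk.snd_mem_support_of_mem_edges _ h2
        have hyP : y ∈ P.support := by simpa [Walk.support_reverse] using hy
        have hyC : y ∈ C.support := List.mem_of_mem_tail (hrotq.mem_iff.mp q.start_mem_support)
        exact hwy.ne' (hmeet y hyP hyC)
  have hWlen := hlong x0 _ hWc
  have hPpos : 0 < P.length := by
    rcases Nat.eq_zero_or_pos P.length with h0 | h
    · exact absurd (P.eq_of_length_eq_zero h0) (by rintro rfl; exact hx0 (List.mem_of_mem_tail hw))
    · exact h
  have h1 : (Walk.cons hadj (q.append P.reverse)).length = q.length + P.length + 1 := by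
    simp [Walk.length_append]
  have h2 : (Walk.cons hwy q).length = q.length + 1 := by simp
  omega

lemma keyB {V : Type*} [DecidableEq V] {G : SimpleGraph V} {v x0 wi wj : V}
    (C : G.Walk v v) (hC : C.IsCycle)
    (hlong : ∀ (a : V) (D : G.Walk a a), D.IsCycle → D.length ≤ C.length)
    (hx0 : x0 ∉ C.support) (hwi : wi ∈ C.support.tail) (hwj : wj ∈ C.support.tail)
    (hne : wi ≠ wj)
    (Pi : G.Walk x0 wi) (hPi : Pi.IsPath) (Pj : G.Walk x0 wj) (hPj : Pj.IsPath)
    (hdisj : ∀ y, y ∈ Pi.support → y ∈ Pj.support → y = x0)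
    (hmeeti : ∀ y ∈ Pi.support, y ∈ C.support → y = wi)
    (hmeetj : ∀ y ∈ Pj.support, y ∈ C.support → y = wj) :
    ¬ G.Adj (C.support.tail.next wi hwi) (C.support.tail.next wj hwj) := by
  intro hadj
  obtain ⟨yi, hai, q, hcyc, hlenD, hrotq, hnexti⟩ := cycle_succ_decomp C hC hwi
  have hqnd : q.support.Nodup := hrotq.nodup_iff.mpr hC.support_nodup
  have hsubC : ∀ z ∈ q.support, z ∈ C.support := fun z hz =>
    List.mem_of_mem_tail (hrotq.mem_iff.mp hz)
  have hwjq : wj ∈ q.support := hrotq.mem_iff.mpr hwj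
  obtain ⟨z, haj, r, hq2⟩ := walk_exists_cons (q.dropUntil wj hwjq) (Or.inl hne.symm)
  have hspec : (q.takeUntil wj hwjq).append (q.dropUntil wj hwjq) = q := q.take_spec hwjq
  set q1 := q.takeUntil wj hwjq with hq1def
  have hqsup : q.support = q1.support ++ r.support := by
    rw [← hspec, Walk.support_append, hq2]
    simp
  have hndq : (q1.support ++ r.support).Nodup := hqsup ▸ hqnd
  have hdisjq : q1.support.Disjoint r.support := List.disjoint_of_nodup_append hndq
  have hnextj : C.support.tail.next wj hwj = z := by
    rw [List.isRotated_next_eq hrotq.symm hC.support_nodup hwj]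
    simp only [hqsup]
    rw [my_next_append q1.support_ne_nil r.support_ne_nil hndq (q1.getLast_support).symm]
    exact r.head_support
  rw [hnexti, hnextj] at hadj
  -- hadj : G.Adj yi z
  have hx0wi : x0 ≠ wi := by rintro rfl; exact hx0 (List.mem_of_mem_tail hwi)
  obtain ⟨w1, ha1, p', hPi'⟩ := walk_exists_cons Pi (Or.inl hx0wi)
  -- facts
  have hwir : wi ∈ r.support := r.end_mem_support
  have hwjq1 : wj ∈ q1.support := q1.end_mem_support
  have hq1nd : q1.support.Nodup := (List.nodup_append.mp hndq).1
  have hrnd : r.support.Nodup := (List.nodup_append.mp hndq).2.1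
  have hq1sub : ∀ a ∈ q1.support, a ∈ C.support := fun a ha =>
    hsubC a (hqsup ▸ List.mem_append_left _ ha)
  have hrsub : ∀ a ∈ r.support, a ∈ C.support := fun a ha =>
    hsubC a (hqsup ▸ List.mem_append_right _ ha)
  have hAnd : p'.support.Nodup := by
    have := hPi.support_nodup
    rw [hPi', Walk.support_cons, List.nodup_cons] at this
    exact this.2
  have hx0A : x0 ∉ p'.support := by
    have := hPi.support_nodup
    rw [hPi', Walk.support_cons, List.nodup_cons] at this
    exact this.1
  have hAsub : ∀ a ∈ p'.support, a ∈ Pi.support := by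
    intro a ha; rw [hPi', Walk.support_cons]; exact List.mem_cons_of_mem _ ha
  have hBr : r.reverse.support = wi :: r.reverse.support.tail := r.reverse.support_eq_cons
  have hBsub : ∀ a ∈ r.reverse.support.tail, a ∈ r.support := by
    intro a ha
    have : a ∈ r.reverse.support := List.mem_of_mem_tail ha
    rwa [Walk.support_reverse, List.mem_reverse] at this
  have hBnd : r.reverse.support.tail.Nodup := by
    have : r.reverse.support.Nodup := by rwa [Walk.support_reverse, List.nodup_reverse]
    exact this.sublist (List.tail_sublist _)
  have hwiB : wi ∉ r.reverse.support.tail := by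
    have : r.reverse.support.Nodup := by rwa [Walk.support_reverse, List.nodup_reverse]
    rw [hBr, List.nodup_cons] at this
    exact this.1
  have hDsub : ∀ a ∈ Pj.reverse.support.tail, a ∈ Pj.support := by
    intro a ha
    have : a ∈ Pj.reverse.support := List.mem_of_mem_tail ha
    rwa [Walk.support_reverse, List.mem_reverse] at this
  have hDnd : Pj.reverse.support.tail.Nodup :=
    (hPj.reverse.support_nodup).sublist (List.tail_sublist _)
  have hwjD : wj ∉ Pj.reverse.support.tail := by
    have : Pj.reverse.support.Nodup := hPj.reverse.support_nodup
    rw [Pj.reverse.support_eq_cons, List.nodup_cons] at this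
    exact this.1
  -- the new cycle
  set rest := p'.append (r.reverse.append ((Walk.cons hadj.symm q1).append Pj.reverse)) with hrest
  have hrsupp : rest.support =
      p'.support ++ (r.reverse.support.tail ++ (q1.support ++ Pj.reverse.support.tail)) := by
    simp [hrest, Walk.support_append, Walk.tail_support_append]
  have dAB : p'.support.Disjoint r.reverse.support.tail := by
    intro a ha hb
    have := hmeeti a (hAsub a ha) (hrsub a (hBsub a hb))
    subst this; exact hwiB hb
  have dAC : p'.support.Disjoint q1.support := by
    intro a ha hb
    have := hmeeti a (hAsub a ha) (hq1sub a hb)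
    subst this; exact hdisjq hb hwir
  have dAD : p'.support.Disjoint Pj.reverse.support.tail := by
    intro a ha hb
    have := hdisj a (hAsub a ha) (hDsub a hb)
    subst this; exact hx0A ha
  have dBC : r.reverse.support.tail.Disjoint q1.support := by
    intro a ha hb
    exact hdisjq hb (hBsub a ha)
  have dBD : r.reverse.support.tail.Disjoint Pj.reverse.support.tail := by
    intro a ha hb
    have := hmeetj a (hDsub a hb) (hrsub a (hBsub a ha))
    subst this; exact hwjD hb
  have dCD : q1.support.Disjoint Pj.reverse.support.tail := by
    intro a ha hb
    have := hmeetj a (hDsub a hb) (hq1sub a ha)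
    subst this; exact hwjD hb
  have hWc : (Walk.cons ha1 rest).IsCycle := by
    rw [Walk.cons_isCycle_iff]
    constructor
    · rw [Walk.isPath_def, hrsupp]
      simp only [List.nodup_append', List.disjoint_append_right]
      exact ⟨hAnd, ⟨hBnd, ⟨hq1nd, hDnd, dCD⟩, dBC, dBD⟩, dAB, dAC, dAD⟩
    · intro he
      rw [hrest] at he
      simp only [Walk.edges_append, Walk.edges_cons, List.mem_append, List.mem_cons] at he
      rcases he with h | h | (h | h) | h
      · exact hx0A (Walk.fst_mem_support_of_mem_edges p' h)
      · have : x0 ∈ r.reverse.support := Walk.fst_mem_support_of_mem_edges _ h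
        rw [Walk.support_reverse, List.mem_reverse] at this
        exact hx0 (hrsub _ this)
      · rw [Sym2.eq_iff] at h
        rcases h with ⟨h1, -⟩ | ⟨h1, -⟩
        · subst h1
          exact hx0 (hrsub _ r.start_mem_support)
        · subst h1
          exact hx0 (hq1sub _ q1.start_mem_support)
      · exact hx0 (hq1sub _ (Walk.fst_mem_support_of_mem_edges q1 h))
      · have : w1 ∈ Pj.reverse.support := Walk.snd_mem_support_of_mem_edges _ h
        rw [Walk.support_reverse, List.mem_reverse] at this
        have hw1Pi : w1 ∈ Pi.support := by
          rw [hPi', Walk.support_cons]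
          exact List.mem_cons_of_mem _ p'.start_mem_support
        exact ha1.ne (hdisj w1 hw1Pi this).symm
  have hWlen := hlong x0 _ hWc
  have hlq2 := congrArg Walk.length hspec
  rw [Walk.length_append, hq2, Walk.length_cons] at hlq2
  have hlenD' : q.length + 1 = C.length := by
    simpa using hlenD
  have hPjpos : 0 < Pj.length := by
    rcases Nat.eq_zero_or_pos Pj.length with h0 | h
    · exact absurd (Pj.eq_of_length_eq_zero h0)
        (by rintro rfl; exact hx0 (List.mem_of_mem_tail hwj))
    · exact h
  simp only [hrest, Walk.length_cons, Walk.length_append, Walk.length_reverse] at hWlen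
  omega


theorem stmt10 {V : Type*} [Fintype V] [DecidableEq V] (G : SimpleGraph V)
    (v : V) (C : G.Walk v v) (hC : C.IsCycle)
    (hlong : ∀ (w : V) (D : G.Walk w w), D.IsCycle → D.length ≤ C.length)
    (x0 : V) (hx0 : x0 ∉ C.support)
    (s : ℕ) (u : Fin s → V) (hu_inj : Function.Injective u)
    (hu : ∀ i, u i ∈ C.support.tail)
    (P : (i : Fin s) → G.Walk x0 (u i)) (hP : ∀ i, (P i).IsPath)
    (hdisj : ∀ i j, i ≠ j → ∀ y, y ∈ (P i).support → y ∈ (P j).support → y = x0)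
    (hmeet : ∀ i, ∀ y ∈ (P i).support, y ∈ C.support → y = u i) :
    ({x0} ∪ Set.range fun i => C.support.tail.next (u i) (hu i) : Set V).Pairwise
      fun a b => ¬ G.Adj a b := by
  intro a ha b hb hne
  simp only [Set.mem_union, Set.mem_singleton_iff, Set.mem_range] at ha hb
  rcases ha with rfl | ⟨i, rfl⟩ <;> rcases hb with rfl | ⟨j, rfl⟩
  · exact absurd rfl hne
  · exact keyA C hC hlong hx0 (hu j) (P j) (hP j) (hmeet j)
  · intro hadj
    exact keyA C hC hlong hx0 (hu i) (P i) (hP i) (hmeet i) hadj.symm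
  · have hij : i ≠ j := by rintro rfl; exact hne rfl
    exact keyB C hC hlong hx0 (hu i) (hu j) (fun h => hij (hu_inj h))
      (P i) (hP i) (P j) (hP j) (hdisj i j hij) (hmeet i) (hmeet j)
end

section
/- For every k ≥ 2 and n ≥ 2k + 1, the graph G = K_k ∨ (K_k^c ∪ K_{n−2k}) is k-connected but not (k+1)-connected. -/
/-- Independence number: the largest size of a set of pairwise nonadjacent vertices. -/
noncomputable def SimpleGraph.indepNum' {V : Type*} (G : SimpleGraph V) : ℕ :=
  sSup {n | ∃ s : Finset V, s.card = n ∧ (s : Set V).Pairwise fun a b => ¬ G.Adj a b}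

/-- `k`-connectedness: more than `k` vertices and deleting any fewer than `k`
vertices leaves a connected graph. -/
def SimpleGraph.IsKConnected {V : Type*} [Fintype V] (G : SimpleGraph V) (k : ℕ) : Prop :=
  k < Fintype.card V ∧
    ∀ S : Finset V, S.card < k → (G.induce ((↑S : Set V)ᶜ)).Connected

/-- The graph `K_k ∨ (K_k^c ∪ K_m)`. -/
def specialGraph (k m : ℕ) : SimpleGraph (Fin k ⊕ (Fin k ⊕ Fin m)) where
  Adj x y := x ≠ y ∧ (x.isLeft = true ∨ y.isLeft = true ∨
      ((∃ a, x = Sum.inr (Sum.inr a)) ∧ (∃ b, y = Sum.inr (Sum.inr b))))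
  symm := ⟨by rintro x y ⟨h1, h2⟩; exact ⟨h1.symm, by tauto⟩⟩
  loopless := ⟨by rintro x ⟨h, -⟩; exact h rfl⟩

/-- The complete split graph `K_k ∨ K_{k+1}^c`. -/
def splitGraph (k : ℕ) : SimpleGraph (Fin k ⊕ Fin (k + 1)) where
  Adj x y := x ≠ y ∧ (x.isLeft = true ∨ y.isLeft = true)
  symm := ⟨by rintro x y ⟨h1, h2⟩; exact ⟨h1.symm, by tauto⟩⟩
  loopless := ⟨by rintro x ⟨h, -⟩; exact h rfl⟩

lemma isolated_eq {V : Type*} {G : SimpleGraph V} {x y : V}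
    (hiso : ∀ z, ¬ G.Adj x z) (h : G.Reachable x y) : x = y := by
  obtain ⟨w⟩ := h
  cases w with
  | nil => rfl
  | cons h p => exact absurd h (hiso _)

theorem stmt13 (k n : ℕ) (hk : 2 ≤ k) (hn : 2 * k + 1 ≤ n) :
    (specialGraph k (n - 2 * k)).IsKConnected k ∧
      ¬ (specialGraph k (n - 2 * k)).IsKConnected (k + 1) := by
  set m := n - 2 * k with hm
  have hm1 : 1 ≤ m := by omega
  constructor
  · constructor
    · simp only [Fintype.card_sum, Fintype.card_fin]
      omega
    · intro S hS
      have hex : ∃ a : Fin k, (Sum.inl a : Fin k ⊕ (Fin k ⊕ Fin m)) ∉ S := by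
        by_contra hcon
        push_neg at hcon
        have hsub : (Finset.univ.image (Sum.inl : Fin k → Fin k ⊕ (Fin k ⊕ Fin m))) ⊆ S := by
          intro x hx
          simp only [Finset.mem_image, Finset.mem_univ, true_and] at hx
          obtain ⟨a, rfl⟩ := hx
          exact hcon a
        have hle := Finset.card_le_card hsub
        rw [Finset.card_image_of_injective _ Sum.inl_injective, Finset.card_univ,
          Fintype.card_fin] at hle
        omega
      obtain ⟨a, ha⟩ := hex
      have hv : (Sum.inl a : Fin k ⊕ (Fin k ⊕ Fin m)) ∈ ((↑S : Set _)ᶜ) := by simpa using ha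
      have key : ∀ u : ((↑S : Set (Fin k ⊕ (Fin k ⊕ Fin m)))ᶜ : Set _),
          ((specialGraph k m).induce _).Reachable u ⟨_, hv⟩ := by
        intro u
        by_cases hu : u = ⟨_, hv⟩
        · exact hu ▸ SimpleGraph.Reachable.refl _
        · refine SimpleGraph.Adj.reachable ?_
          refine ⟨fun h => hu (Subtype.ext h), Or.inr (Or.inl rfl)⟩
      haveI : Nonempty ((↑S : Set (Fin k ⊕ (Fin k ⊕ Fin m)))ᶜ : Set _) := ⟨⟨_, hv⟩⟩
      exact ⟨fun u w => (key u).trans (key w).symm⟩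
  · rintro ⟨-, h⟩
    set S : Finset (Fin k ⊕ (Fin k ⊕ Fin m)) :=
      Finset.univ.image (Sum.inl : Fin k → Fin k ⊕ (Fin k ⊕ Fin m)) with hSdef
    have hS : S.card < k + 1 := by
      rw [hSdef, Finset.card_image_of_injective _ Sum.inl_injective, Finset.card_univ,
        Fintype.card_fin]
      omega
    have hc := h S hS
    have h0 : (Sum.inr (Sum.inl (⟨0, by omega⟩ : Fin k)) : Fin k ⊕ (Fin k ⊕ Fin m))
        ∈ ((↑S : Set _)ᶜ) := by simp [hSdef]
    have h1 : (Sum.inr (Sum.inl (⟨1, by omega⟩ : Fin k)) : Fin k ⊕ (Fin k ⊕ Fin m))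
        ∈ ((↑S : Set _)ᶜ) := by simp [hSdef]
    have hreach := hc.preconnected ⟨_, h0⟩ ⟨_, h1⟩
    have hiso : ∀ z : ((↑S : Set (Fin k ⊕ (Fin k ⊕ Fin m)))ᶜ : Set _),
        ¬ ((specialGraph k m).induce _).Adj ⟨_, h0⟩ z := by
      rintro ⟨z, hz⟩ ⟨hne, hor⟩
      rcases hor with hl | hl | ⟨⟨b, hb⟩, -⟩
      · simp at hl
      · -- z is not a left vertex since all left vertices are in S
        simp only [hSdef, Set.mem_compl_iff, Finset.coe_image, Set.mem_image] at hz
        cases z with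
        | inl b => exact hz ⟨b, by simp⟩
        | inr b => simp at hl
      · simp at hb
    have := isolated_eq hiso hreach
    simp at this
end

section
/- Let G be a k-connected graph (k ≥ 2) of order n with χ(G) ≥ n − k that is not Hamiltonian. Then n ≥ 2k + 1, χ(G) = n − k, and α(G) = k + 1. -/
section CEProof

open List

set_option linter.unusedSectionVars false
namespace CEAux

variable {V : Type*} [DecidableEq V] {G : SimpleGraph V}

/-- A cycle, represented as a nonrepeating list of length ≥ 3 which is chained by adjacency
and closes up. -/
def IsCyc (G : SimpleGraph V) (l : List V) : Prop :=
  3 ≤ l.length ∧ l.Nodup ∧ l.IsChain G.Adj ∧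
    ∀ a ∈ l.head?, ∀ b ∈ l.getLast?, G.Adj b a

lemma IsCyc.rotate_one {l : List V} (h : IsCyc G l) : IsCyc G (l.rotate 1) := by
  obtain ⟨hlen, hnd, hch, hcl⟩ := h
  match l with
  | a :: b :: t =>
    have h1 : (a :: b :: t).rotate 1 = (b :: t) ++ [a] := by
      simp [List.rotate_cons_succ]
    rw [h1]
    refine ⟨by simp at hlen ⊢; omega, ?_, ?_, ?_⟩
    · exact (List.perm_append_singleton a (b :: t)).nodup_iff.mpr hnd
    · rw [List.isChain_append]
      refine ⟨hch.tail, List.isChain_singleton _, ?_⟩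
      intro x hx y hy
      simp at hy; subst hy
      have : (b :: t).getLast? = (a :: b :: t).getLast? := by
        simp [List.getLast?_cons_cons]
      rw [this] at hx
      exact hcl a (by simp) x hx
    · intro x hx y hy
      simp at hx
      rw [List.getLast?_append] at hy
      simp at hy
      subst hx; subst hy
      exact (List.isChain_cons_cons.mp hch).1

lemma IsCyc.rotate {l : List V} (h : IsCyc G l) (m : ℕ) : IsCyc G (l.rotate m) := by
  induction m with
  | zero => simpa using h
  | succ m ih =>
    have : l.rotate (m + 1) = (l.rotate m).rotate 1 := by
      rw [List.rotate_rotate]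
    rw [this]
    exact ih.rotate_one


lemma head?_rotate {l : List V} {m : ℕ} (h : m < l.length) :
    (l.rotate m).head? = l[m]? := by
  rw [List.rotate_eq_drop_append_take h.le]
  have hne : l.drop m ≠ [] := by
    simp [List.drop_eq_nil_iff]; omega
  rw [List.head?_append_of_ne_nil _ hne]
  rw [List.head?_drop]

lemma rotate_eq_rotate_of_head?_eq {l : List V} (hnd : l.Nodup) (hl : l ≠ [])
    {m1 m2 : ℕ} (h : (l.rotate m1).head? = (l.rotate m2).head?) :
    l.rotate m1 = l.rotate m2 := by
  have hlen : 0 < l.length := List.length_pos_iff.mpr hl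
  rw [← List.rotate_mod l m1, ← List.rotate_mod l m2] at h ⊢
  have h1 : m1 % l.length < l.length := Nat.mod_lt _ hlen
  have h2 : m2 % l.length < l.length := Nat.mod_lt _ hlen
  rw [head?_rotate h1, head?_rotate h2] at h
  rw [List.getElem?_eq_getElem h1, List.getElem?_eq_getElem h2] at h
  simp only [Option.some.injEq] at h
  have : m1 % l.length = m2 % l.length := (List.Nodup.getElem_inj_iff hnd (hi := h1) (hj := h2)).mp h
  rw [this]

/-- the cyclic successor of `u` in the list `c`. -/
noncomputable def sfun (c : List V) (u : V) : V :=
  ((c.rotate (c.idxOf u + 1)).head?).getD u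

lemma sfun_spec {c : List V} {u : V} (hu : u ∈ c) :
    ∃ m, (c.rotate m).head? = some (sfun c u) ∧ (c.rotate m).getLast? = some u := by
  classical
  have hidx : c.idxOf u < c.length := List.idxOf_lt_length_iff.mpr hu
  refine ⟨c.idxOf u + 1, ?_, ?_⟩
  · have hne : c.rotate (c.idxOf u + 1) ≠ [] := by
      rw [Ne, List.rotate_eq_nil_iff]
      rintro rfl; simp at hu
    obtain ⟨x, t, hxt⟩ := List.exists_cons_of_ne_nil hne
    simp [sfun, hxt]
  · rcases Nat.lt_or_ge (c.idxOf u + 1) c.length with hlt | hge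
    · rw [List.rotate_eq_drop_append_take hlt.le]
      rw [List.getLast?_append_of_ne_nil]
      · rw [List.take_succ]
        rw [List.getElem?_eq_getElem hidx]
        simp only [List.getElem_idxOf]
        simp
      · rw [Ne, List.take_eq_nil_iff]
        push_neg
        constructor
        · omega
        · rintro rfl; simp at hu
    · have : c.idxOf u + 1 = c.length := by omega
      rw [this, List.rotate_length]
      rw [List.getLast?_eq_getElem?]
      rw [List.getElem?_eq_getElem (by omega : c.length - 1 < c.length)]
      have : c.length - 1 = c.idxOf u := by omega
      simp only [this, List.getElem_idxOf]


/-- Surgery 1: a longest cycle `r` ending at `u` and starting at `s` cannot be extended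
by an outside path `q` from a neighbor of `u` to a neighbor of `s`. -/
lemma surgery1 {L : ℕ} (hmax : ∀ l : List V, IsCyc G l → l.length ≤ L)
    {r q : List V} (hr : IsCyc G r) (hrlen : r.length = L)
    {s u h h' : V} (hs : r.head? = some s) (hu : r.getLast? = some u)
    (hq : q ≠ []) (hqnd : q.Nodup) (hqch : q.IsChain G.Adj)
    (hqh : q.head? = some h) (hqh' : q.getLast? = some h')
    (huh : G.Adj u h) (hh's : G.Adj h' s)
    (hdisj : ∀ x ∈ q, x ∉ r) : False := by
  have hrne : r ≠ [] := by rintro rfl; simp at hs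
  have hcyc : IsCyc G (r ++ q) := by
    refine ⟨?_, ?_, ?_, ?_⟩
    · rw [List.length_append]; have := hr.1; omega
    · rw [List.nodup_append]
      exact ⟨hr.2.1, hqnd, fun x hx y hy hxy => hdisj y hy (hxy ▸ hx)⟩
    · rw [List.isChain_append]
      refine ⟨hr.2.2.1, hqch, ?_⟩
      intro x hx y hy
      rw [hu] at hx; rw [hqh] at hy
      simp at hx hy; subst hx; subst hy
      exact huh
    · intro a ha b hb
      rw [List.head?_append_of_ne_nil _ hrne, hs] at ha
      rw [List.getLast?_append_of_ne_nil _ hq, hqh'] at hb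
      simp at ha hb; subst ha; subst hb
      exact hh's
  have := hmax _ hcyc
  rw [List.length_append, hrlen] at this
  have : q.length = 0 := by omega
  exact hq (List.length_eq_zero_iff.mp this)

/-- Surgery 2: crossing surgery on a longest cycle `B ++ A`. -/
lemma surgery2 {L : ℕ} (hmax : ∀ l : List V, IsCyc G l → l.length ≤ L)
    {A B q : List V} (hr : IsCyc G (B ++ A)) (hrlen : (B ++ A).length = L)
    {s u' s' u h h' : V}
    (hA : A ≠ []) (hB : B ≠ [])
    (hBh : B.head? = some s) (hBl : B.getLast? = some u')
    (hAh : A.head? = some s') (hAl : A.getLast? = some u)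
    (hss' : G.Adj s s')
    (hq : q ≠ []) (hqnd : q.Nodup) (hqch : q.IsChain G.Adj)
    (hqh : q.head? = some h) (hqh' : q.getLast? = some h')
    (huh : G.Adj u h) (hh'u' : G.Adj h' u')
    (hdisj : ∀ x ∈ q, x ∉ B ++ A) : False := by
  have hcyc : IsCyc G (q ++ (B.reverse ++ A)) := by
    refine ⟨?_, ?_, ?_, ?_⟩
    · simp only [List.length_append, List.length_reverse]
      have := hr.1; rw [List.length_append] at this; omega
    · rw [List.nodup_append]
      refine ⟨hqnd, ?_, ?_⟩
      · have hperm : (B.reverse ++ A) ~ (B ++ A) := (B.reverse_perm).append_right A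
        exact hperm.nodup_iff.mpr hr.2.1
      · intro x hx y hx' hxy; subst hxy
        apply hdisj x hx
        simp only [List.mem_append, List.mem_reverse] at hx' ⊢
        exact hx'
    · rw [List.isChain_append]
      refine ⟨hqch, ?_, ?_⟩
      · rw [List.isChain_append]
        refine ⟨?_, ?_, ?_⟩
        · rw [List.isChain_reverse]
          have := (List.isChain_append.mp hr.2.2.1).1
          exact this.imp (fun a b hab => hab.symm)
        · exact (List.isChain_append.mp hr.2.2.1).2.1
        · intro x hx y hy
          rw [List.getLast?_reverse, hBh] at hx
          rw [hAh] at hy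
          simp at hx hy; subst hx; subst hy
          exact hss'
      · intro x hx y hy
        rw [hqh'] at hx
        rw [List.head?_append_of_ne_nil _ (by simpa using hB), List.head?_reverse, hBl] at hy
        simp at hx hy; subst hx; subst hy
        exact hh'u'
    · intro a ha b hb
      rw [List.head?_append_of_ne_nil _ hq, hqh] at ha
      rw [List.getLast?_append_of_ne_nil _ (List.append_ne_nil_of_right_ne_nil _ hA)] at hb
      rw [List.getLast?_append_of_ne_nil _ hA, hAl] at hb
      simp at ha hb; subst ha; subst hb
      exact huh
  have := hmax _ hcyc
  simp only [List.length_append, List.length_reverse] at this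
  rw [List.length_append] at hrlen
  have : q.length = 0 := by omega
  exact hq (List.length_eq_zero_iff.mp this)


variable [Fintype V]

lemma exists_cyc [Nonempty V]
    (hdeg : ∀ v : V, ∃ x y : V, x ≠ y ∧ G.Adj v x ∧ G.Adj v y) :
    ∃ l : List V, IsCyc G l := by
  classical
  set n := Fintype.card V with hn
  set P : ℕ → Prop := fun m => ∃ l : List V, l ≠ [] ∧ l.Nodup ∧ l.IsChain G.Adj ∧ l.length = m
    with hP
  have hn1 : 1 ≤ n := Fintype.card_pos
  have hP1 : P 1 := ⟨[Classical.arbitrary V], by simp, by simp, by simp, rfl⟩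
  set M := Nat.findGreatest P n with hM
  have hPM : P M := Nat.findGreatest_spec hn1 hP1
  have hmaxP : ∀ l : List V, l ≠ [] → l.Nodup → l.IsChain G.Adj → l.length ≤ M := by
    intro l h1 h2 h3
    exact Nat.le_findGreatest (h2.length_le_card) ⟨l, h1, h2, h3, rfl⟩
  obtain ⟨l, hlne, hlnd, hlch, hllen⟩ := hPM
  obtain ⟨h, t, rfl⟩ := List.exists_cons_of_ne_nil hlne
  have hext : ∀ x, G.Adj h x → x ∈ h :: t := by
    intro x hx
    by_contra hxl
    have : (x :: h :: t).length ≤ M :=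
      hmaxP _ (by simp) (by simp [hlnd, hxl]) (List.isChain_cons_cons.mpr ⟨hx.symm, hlch⟩)
    simp only [List.length_cons] at this hllen
    omega
  obtain ⟨x, y, hxy, hhx, hhy⟩ := hdeg h
  have hxt : x ∈ t := by
    have := hext x hhx
    rcases List.mem_cons.mp this with h' | h'
    · exact absurd h'.symm hhx.ne
    · exact h'
  have hyt : y ∈ t := by
    have := hext y hhy
    rcases List.mem_cons.mp this with h' | h'
    · exact absurd h'.symm hhy.ne
    · exact h'
  obtain ⟨b, t', rfl⟩ := List.exists_cons_of_ne_nil (by rintro rfl; simp at hxt : t ≠ [])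
  -- pick z ∈ {x, y} with z ≠ b
  obtain ⟨z, hzb, hzt, hhz⟩ : ∃ z, z ≠ b ∧ z ∈ t' ∧ G.Adj h z := by
    by_cases hxb : x = b
    · refine ⟨y, fun hyb => hxy (by rw [hxb, hyb]), ?_, hhy⟩
      rcases List.mem_cons.mp hyt with h' | h'
      · exact absurd (h'.trans hxb.symm) (Ne.symm hxy)
      · exact h'
    · refine ⟨x, hxb, ?_, hhx⟩
      rcases List.mem_cons.mp hxt with h' | h'
      · exact absurd h' hxb
      · exact h'
  have hzl : z ∈ h :: b :: t' := by simp [hzt]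
  obtain ⟨l₁, l₂, hdec⟩ := List.append_of_mem hzl
  -- l₁ starts with h, b
  obtain ⟨l₁', hl₁⟩ : ∃ l₁', l₁ = h :: b :: l₁' := by
    match l₁, hdec with
    | [], hdec => exact absurd (by injection hdec with e _; exact e.symm) hhz.ne'
    | [a], hdec =>
      injection hdec with e1 e2; injection e2 with e2 _
      exact absurd e2.symm hzb
    | a :: a' :: l₁', hdec =>
      injection hdec with e1 e2; injection e2 with e2 e3
      exact ⟨l₁', by rw [e1, e2]⟩
  refine ⟨l₁ ++ [z], ?_, ?_, ?_, ?_⟩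
  · simp [hl₁]
  · have : (l₁ ++ [z]) <+ ((l₁ ++ [z]) ++ l₂) := List.sublist_append_left _ _
    rw [List.append_assoc, List.singleton_append, ← hdec] at this
    exact hlnd.sublist this
  · have : List.IsChain G.Adj ((l₁ ++ [z]) ++ l₂) := by
      rw [List.append_assoc, List.singleton_append, ← hdec]; exact hlch
    exact (List.isChain_append.mp this).1
  · intro a ha c hc
    rw [List.head?_append_of_ne_nil _ (by simp [hl₁] : l₁ ≠ []), hl₁] at ha
    rw [List.getLast?_concat] at hc
    simp at ha hc; subst ha; subst hc
    exact hhz.symm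


omit [Fintype V] in
lemma walk_of_chain : ∀ (l : List V), l.IsChain G.Adj → ∀ {a b : V},
    l.head? = some a → l.getLast? = some b → ∃ p : G.Walk a b, p.support = l := by
  intro l
  induction l with
  | nil => intro _ a b ha; simp at ha
  | cons x t ih =>
    intro hch a b ha hb
    simp only [List.head?_cons, Option.some.injEq] at ha
    subst ha
    match t, hch, hb, ih with
    | [], _, hb, _ =>
      simp only [List.getLast?_singleton, Option.some.injEq] at hb
      subst hb
      exact ⟨SimpleGraph.Walk.nil, rfl⟩
    | y :: t', hch, hb, ih =>
      have hadj : G.Adj x y := (List.isChain_cons_cons.mp hch).1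
      have hb' : (y :: t').getLast? = some b := by
        rw [List.getLast?_cons_cons] at hb; exact hb
      obtain ⟨p, hp⟩ := ih (List.isChain_cons_cons.mp hch).2 (a := y) (b := b) (by simp) hb'
      exact ⟨SimpleGraph.Walk.cons hadj p, by simp [hp]⟩

omit [Fintype V] in
lemma induced_walk {s : Set V} : ∀ {a b : ↥s} (p : (G.induce s).Walk a b),
    ∃ q : G.Walk a.val b.val, ∀ x ∈ q.support, x ∈ s := by
  intro a b p
  induction p with
  | nil =>
    refine ⟨SimpleGraph.Walk.nil, ?_⟩
    intro x hx
    simp only [SimpleGraph.Walk.support_nil, List.mem_singleton] at hx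
    subst hx
    exact Subtype.coe_prop _
  | @cons u v w hadj p ih =>
    obtain ⟨q, hq⟩ := ih
    have : G.Adj u.val v.val := hadj
    refine ⟨SimpleGraph.Walk.cons this q, ?_⟩
    intro x hx
    rw [SimpleGraph.Walk.support_cons, List.mem_cons] at hx
    rcases hx with rfl | hx
    · exact u.2
    · exact hq x hx

omit [Fintype V] in
lemma crossing {H : Set V} : ∀ {a b : V} (p : G.Walk a b), a ∈ H → b ∉ H →
    ∃ x y, G.Adj x y ∧ x ∈ H ∧ y ∉ H ∧ y ∈ p.support := by
  intro a b p
  induction p with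
  | nil => intro ha hb; exact absurd ha hb
  | @cons u v w hadj p ih =>
    intro ha hb
    by_cases hv : v ∈ H
    · obtain ⟨x, y, h1, h2, h3, h4⟩ := ih hv hb
      exact ⟨x, y, h1, h2, h3, by simp [h4]⟩
    · exact ⟨u, v, hadj, ha, hv, by simp⟩

omit [Fintype V] in
lemma head_ne_getLast_of_nodup {l : List V} (hnd : l.Nodup) (hlen : 2 ≤ l.length)
    {a b : V} (ha : l.head? = some a) (hb : l.getLast? = some b) : a ≠ b := by
  rintro rfl
  obtain ⟨x, t, rfl⟩ : ∃ x t, l = x :: t := by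
    match l, hlen with
    | x :: t, _ => exact ⟨x, t, rfl⟩
  obtain ⟨y, t', rfl⟩ : ∃ y t', t = y :: t' := by
    match t, hlen with
    | y :: t', _ => exact ⟨y, t', rfl⟩
  simp only [List.head?_cons, Option.some.injEq] at ha
  subst ha
  rw [List.getLast?_cons_cons] at hb
  have hmem := List.mem_of_getLast? hb
  rw [List.nodup_cons] at hnd
  exact hnd.1 hmem

omit [Fintype V] in
lemma snd_of_edge_mem_path {x y z : V} (q : G.Walk x y) (hq : q.IsPath)
    (he : s(x, z) ∈ q.edges) : ∃ (h : G.Adj x z) (q' : G.Walk z y), q = SimpleGraph.Walk.cons h q' := by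
  match q with
  | SimpleGraph.Walk.nil => simp at he
  | SimpleGraph.Walk.cons h q' =>
    rw [SimpleGraph.Walk.edges_cons, List.mem_cons] at he
    rcases he with he | he
    · rw [Sym2.eq_iff] at he
      rcases he with ⟨-, rfl⟩ | ⟨h1, h2⟩
      · exact ⟨h, q', rfl⟩
      · exact absurd h1 h.ne
    · exfalso
      have := SimpleGraph.Walk.fst_mem_support_of_mem_edges q' he
      have h2 := hq.support_nodup
      rw [SimpleGraph.Walk.support_cons, List.nodup_cons] at h2
      exact h2.1 this

lemma ham_of_cyc_univ {l : List V} (hcyc : IsCyc G l) (huniv : ∀ x : V, x ∈ l) :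
    G.IsHamiltonian := by
  classical
  obtain ⟨hlen, hnd, hch, hcl⟩ := hcyc
  obtain ⟨a, t, rfl⟩ := List.exists_cons_of_ne_nil (by rintro rfl; simp at hlen : l ≠ [])
  have htne : t ≠ [] := by rintro rfl; simp at hlen
  obtain ⟨c, t', rfl⟩ := List.exists_cons_of_ne_nil htne
  have hb : ∃ b, (c :: t').getLast? = some b := ⟨_, List.getLast?_eq_getLast (by simp)⟩
  obtain ⟨b, hbl⟩ := hb
  have hba : G.Adj b a := by
    apply hcl a (by simp) b
    rw [List.getLast?_cons_cons]; exact hbl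
  -- walk along c :: t'
  obtain ⟨pt, hpt⟩ := walk_of_chain (G := G) (c :: t') (List.isChain_cons_cons.mp hch).2 (a := c) (b := b) (by simp) hbl
  set p' : G.Walk c a := pt.concat hba with hp'
  have hsup' : p'.support = (c :: t') ++ [a] := by
    rw [hp', SimpleGraph.Walk.support_concat, hpt]
  have hanl : a ∉ c :: t' := by
    rw [List.nodup_cons] at hnd; exact hnd.1
  have hpath : p'.IsPath := by
    apply SimpleGraph.Walk.IsPath.mk'
    rw [hsup']
    exact (List.perm_append_singleton a _).nodup_iff.mpr (by simp [hnd, hanl])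
  have hac : G.Adj a c := (List.isChain_cons_cons.mp hch).1
  set w : G.Walk a a := SimpleGraph.Walk.cons hac p' with hw
  have hwcyc : w.IsCycle := by
    rw [hw, SimpleGraph.Walk.cons_isCycle_iff]
    refine ⟨hpath, ?_⟩
    intro hmem
    have hmem' : s(a, c) ∈ p'.reverse.edges := by
      rw [SimpleGraph.Walk.edges_reverse, List.mem_reverse]; exact hmem
    obtain ⟨hadj, q', hq'⟩ := snd_of_edge_mem_path p'.reverse hpath.reverse hmem'
    -- then c is the second vertex of p'.reverse, i.e. penultimate of p'
    have hsnd : p'.reverse.support = a :: q'.support := by rw [hq']; simp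
    have hrev : p'.reverse.support = ((c :: t') ++ [a]).reverse := by
      rw [SimpleGraph.Walk.support_reverse, hsup']
    have hq's : q'.support.head? = some c := by
      have := SimpleGraph.Walk.support_eq_cons q'
      exact (congrArg List.head? this).trans rfl
    -- q'.support = (c :: t').reverse
    have : a :: q'.support = a :: (c :: t').reverse := by
      rw [← hsnd, hrev]; simp
    have hqs : q'.support = (c :: t').reverse := by injection this
    rw [hqs] at hq's
    -- head of reverse = getLast
    have : (c :: t').getLast? = some c := by
      rw [← List.head?_reverse]; exact hq's
    rw [hbl] at this
    simp only [Option.some.injEq] at this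
    subst this
    -- b = c : but b is the last of c :: t' and c the head, with nodup & length ≥ 2
    have h2 : 2 ≤ (b :: t').length := by simp at hlen ⊢; omega
    have hnd' : (b :: t').Nodup := (List.nodup_cons.mp hnd).2
    exact head_ne_getLast_of_nodup hnd' h2 (by simp) hbl rfl
  intro _
  refine ⟨a, w, ?_⟩
  rw [SimpleGraph.Walk.isHamiltonianCycle_iff_isCycle_and_support_count_tail_eq_one]
  refine ⟨hwcyc, ?_⟩
  intro x
  have hsupw : w.support = a :: ((c :: t') ++ [a]) := by
    rw [hw, SimpleGraph.Walk.support_cons, hsup']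
  rw [hsupw]
  simp only [List.tail_cons]
  apply List.count_eq_one_of_mem
  · exact (List.perm_append_singleton a _).nodup_iff.mpr (by simp [hnd, hanl])
  · have := huniv x
    rcases List.mem_cons.mp this with rfl | hx
    · exact List.mem_append_right _ (by simp)
    · exact List.mem_append_left _ hx


omit [DecidableEq V] [Fintype V] in
lemma first_step {a b : V} (hab : a ≠ b) (p : G.Walk a b) : ∃ x, G.Adj a x := by
  cases p with
  | nil => exact absurd rfl hab
  | cons h _ => exact ⟨_, h⟩

lemma mindeg (G : SimpleGraph V) (k : ℕ)
    (hcard : k < Fintype.card V)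
    (hcut : ∀ S : Finset V, S.card < k → (G.induce ((↑S : Set V)ᶜ)).Connected) :
    ∀ v : V, ∃ N : Finset V, k ≤ N.card ∧ ∀ x ∈ N, G.Adj v x := by
  classical
  intro v
  refine ⟨Finset.univ.filter (fun x => G.Adj v x), ?_, fun x hx => (Finset.mem_filter.mp hx).2⟩
  by_contra hlt
  push_neg at hlt
  set S := Finset.univ.filter (fun x => G.Adj v x) with hS
  have hconn2 := hcut S hlt
  have hvS : v ∈ ((↑S : Set V)ᶜ) := by simp [hS]
  have hcard2 : (insert v S).card < Fintype.card V := by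
    have h1 := Finset.card_insert_le v S
    have h2 : S.card < k := hlt
    omega
  obtain ⟨u, hu⟩ : ∃ u, u ∉ insert v S := by
    by_contra hall
    push_neg at hall
    have : (insert v S) = Finset.univ := Finset.eq_univ_iff_forall.mpr hall
    rw [this, Finset.card_univ] at hcard2
    omega
  have huS : u ∈ ((↑S : Set V)ᶜ) := by
    simp only [Finset.mem_insert, not_or] at hu
    simp [hu.2]
  have huv : u ≠ v := by
    simp only [Finset.mem_insert, not_or] at hu
    exact hu.1
  obtain ⟨p⟩ := hconn2.preconnected ⟨v, hvS⟩ ⟨u, huS⟩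
  have hvu : (⟨v, hvS⟩ : ((↑S : Set V)ᶜ : Set V)) ≠ ⟨u, huS⟩ := by
    intro h; exact huv (congrArg Subtype.val h).symm
  obtain ⟨w, hw⟩ := first_step hvu p
  have hadj : G.Adj v w.val := hw
  have hwS : w.val ∈ ((↑S : Set V)ᶜ) := w.2
  simp [hS] at hwS
  exact hwS hadj

lemma key (G : SimpleGraph V) (k : ℕ) (hk : 2 ≤ k)
    (hcard : k < Fintype.card V)
    (hcut : ∀ S : Finset V, S.card < k → (G.induce ((↑S : Set V)ᶜ)).Connected)
    (hham : ¬ G.IsHamiltonian) :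
    ∃ F : Finset V, k + 1 ≤ F.card ∧ (F : Set V).Pairwise fun a b => ¬ G.Adj a b := by
  classical
  have hne : Nonempty V := Fintype.card_pos_iff.mp (by omega)
  have hdeg := mindeg G k hcard hcut
  have hdeg2 : ∀ v : V, ∃ x y, x ≠ y ∧ G.Adj v x ∧ G.Adj v y := by
    intro v
    obtain ⟨N, hN1, hN2⟩ := hdeg v
    have h2 : 1 < N.card := by omega
    obtain ⟨x, hx, y, hy, hxy⟩ := Finset.one_lt_card.mp h2
    exact ⟨x, y, hxy, hN2 x hx, hN2 y hy⟩
  obtain ⟨c0, hc0⟩ := exists_cyc (G := G) hdeg2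
  -- the longest cycle
  set n := Fintype.card V with hn
  set P : ℕ → Prop := fun m => ∃ l : List V, IsCyc G l ∧ l.length = m with hP
  set M := Nat.findGreatest P n with hM
  have hPM : P M := Nat.findGreatest_spec (hc0.2.1.length_le_card) ⟨c0, hc0, rfl⟩
  obtain ⟨c, hcyc, hclen⟩ := hPM
  have hmax : ∀ l : List V, IsCyc G l → l.length ≤ M := fun l hl =>
    Nat.le_findGreatest (hl.2.1.length_le_card) ⟨l, hl, rfl⟩
  have hcne : c ≠ [] := by
    have := hcyc.1; rintro rfl; simp at this
  -- a vertex outside the longest cycle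
  obtain ⟨v, hv⟩ : ∃ v, v ∉ c := by
    by_contra hall
    push_neg at hall
    exact hham (ham_of_cyc_univ hcyc hall)
  -- the component of v outside the cycle
  set H : Set V := {w | ∃ p : G.Walk v w, ∀ x ∈ p.support, x ∉ c} with hH
  have hvH : v ∈ H := ⟨SimpleGraph.Walk.nil, by intro x hx; simp at hx; subst hx; exact hv⟩
  have hHc : ∀ w ∈ H, w ∉ c := by
    rintro w ⟨p, hp⟩
    exact hp w (SimpleGraph.Walk.end_mem_support p)
  have hHclosed : ∀ x ∈ H, ∀ y, G.Adj x y → y ∉ c → y ∈ H := by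
    rintro x ⟨p, hp⟩ y hxy hyc
    refine ⟨p.concat hxy, ?_⟩
    intro z hz
    rw [SimpleGraph.Walk.support_concat] at hz
    rw [List.mem_append] at hz
    rcases hz with h | h
    · exact hp z h
    · rw [List.mem_singleton] at h; subst h; exact hyc
  have hHpath : ∀ h1 ∈ H, ∀ h2 ∈ H, ∃ q : List V, q ≠ [] ∧ q.Nodup ∧ q.IsChain G.Adj ∧
      q.head? = some h1 ∧ q.getLast? = some h2 ∧ ∀ x ∈ q, x ∈ H := by
    rintro h1 ⟨p1, hp1⟩ h2 ⟨p2, hp2⟩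
    set w0 := (p1.reverse.append p2).bypass with hw0
    have hw0path : w0.IsPath := SimpleGraph.Walk.bypass_isPath _
    have hsub : ∀ x ∈ w0.support, x ∉ c := by
      intro x hx
      have hx2 := SimpleGraph.Walk.support_bypass_subset _ hx
      rw [SimpleGraph.Walk.support_append] at hx2
      rcases List.mem_append.mp hx2 with h | h
      · rw [SimpleGraph.Walk.support_reverse, List.mem_reverse] at h
        exact hp1 x h
      · exact hp2 x (List.mem_of_mem_tail h)
    refine ⟨w0.support, SimpleGraph.Walk.support_ne_nil _, hw0path.support_nodup,
      SimpleGraph.Walk.isChain_adj_support _, ?_, ?_, ?_⟩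
    · rw [SimpleGraph.Walk.support_eq_cons]; rfl
    · rw [← List.head?_reverse, ← SimpleGraph.Walk.support_reverse,
        SimpleGraph.Walk.support_eq_cons]
      rfl
    · intro x hx
      refine ⟨p1.append (w0.takeUntil x hx), ?_⟩
      intro z hz
      rw [SimpleGraph.Walk.support_append] at hz
      rcases List.mem_append.mp hz with h | h
      · exact hp1 z h
      · exact hsub z (SimpleGraph.Walk.support_takeUntil_subset _ hx (List.mem_of_mem_tail h))
  set U : Finset V := c.toFinset.filter (fun u => ∃ h ∈ H, G.Adj u h) with hUdef
  have hUc : ∀ u ∈ U, u ∈ c ∧ ∃ h ∈ H, G.Adj u h := by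
    intro u hu
    rw [hUdef, Finset.mem_filter, List.mem_toFinset] at hu
    exact hu
  have hsfc : ∀ u ∈ c, sfun c u ∈ c := by
    intro u hu
    obtain ⟨m, hh, _⟩ := sfun_spec hu
    have : sfun c u ∈ c.rotate m := List.mem_of_mem_head? (by rw [hh]; rfl)
    rwa [List.mem_rotate] at this
  -- Surgery-1 consequence: the successor of any cycle vertex with a neighbour in H
  -- has no neighbour in H.
  have hS1 : ∀ u ∈ c, (∃ h ∈ H, G.Adj u h) → ∀ h' ∈ H, ¬ G.Adj (sfun c u) h' := by
    rintro u huc ⟨h, hh, huh⟩ h' hh' hadj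
    obtain ⟨m, hhead, hlast⟩ := sfun_spec huc
    obtain ⟨q, hq1, hq2, hq3, hq4, hq5, hq6⟩ := hHpath h hh h' hh'
    refine surgery1 hmax (hcyc.rotate m) (by rw [List.length_rotate, hclen]) hhead hlast
      hq1 hq2 hq3 hq4 hq5 huh hadj.symm ?_
    intro x hx hx2
    rw [List.mem_rotate] at hx2
    exact hHc x (hq6 x hx) hx2
  -- |U| ≥ k
  have hUk : k ≤ U.card := by
    by_contra hlt
    push_neg at hlt
    by_cases hWU : ∀ w ∈ c, w ∈ U
    · obtain ⟨u₀, hu₀c⟩ : ∃ u₀, u₀ ∈ c := List.exists_mem_of_ne_nil c hcne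
      have hu₀U := hUc _ (hWU u₀ hu₀c)
      have hsU := hUc _ (hWU _ (hsfc u₀ hu₀c))
      obtain ⟨_, h', hh', hadj⟩ := hsU
      exact hS1 u₀ hu₀c hu₀U.2 h' hh' hadj
    · push_neg at hWU
      obtain ⟨w, hwc, hwU⟩ := hWU
      have hconn2 := hcut U hlt
      have hvU : v ∈ ((↑U : Set V)ᶜ) := by
        intro hmem
        rw [Finset.mem_coe, hUdef, Finset.mem_filter, List.mem_toFinset] at hmem
        exact hv hmem.1
      have hwUc : w ∈ ((↑U : Set V)ᶜ) := fun hmem => hwU hmem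
      obtain ⟨p⟩ := hconn2.preconnected ⟨v, hvU⟩ ⟨w, hwUc⟩
      obtain ⟨q, hq⟩ := induced_walk (G := G) p
      have hwH : w ∉ H := fun h => hHc w h hwc
      obtain ⟨x, y, hxy, hxH, hyH, hymem⟩ := crossing q hvH hwH
      have hyc : y ∈ c := by
        by_contra hyc
        exact hyH (hHclosed x hxH y hxy hyc)
      have hyU : y ∈ U := by
        rw [hUdef, Finset.mem_filter, List.mem_toFinset]
        exact ⟨hyc, x, hxH, hxy.symm⟩
      exact (hq y hymem) hyU
  -- injectivity of the successor map
  have hinj : ∀ u ∈ c, ∀ u' ∈ c, sfun c u = sfun c u' → u = u' := by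
    intro u hu u' hu' he
    obtain ⟨m1, hh1, hl1⟩ := sfun_spec hu
    obtain ⟨m2, hh2, hl2⟩ := sfun_spec hu'
    have heq : c.rotate m1 = c.rotate m2 := by
      apply rotate_eq_rotate_of_head?_eq hcyc.2.1 hcne
      rw [hh1, hh2, he]
    rw [heq, hl2] at hl1
    exact (Option.some_injective _ hl1).symm
  -- Surgery-2 consequence: successors of distinct elements of U are non-adjacent
  have hS2 : ∀ u ∈ U, ∀ u' ∈ U, u ≠ u' → ¬ G.Adj (sfun c u) (sfun c u') := by
    intro u hu u' hu' hne2 hadj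
    obtain ⟨huc, h, hh, huh⟩ := hUc u hu
    obtain ⟨hu'c, h', hh', hu'h'⟩ := hUc u' hu'
    obtain ⟨m1, hh1, hl1⟩ := sfun_spec huc
    obtain ⟨m2, hh2, hl2⟩ := sfun_spec hu'c
    have hss' : sfun c u ≠ sfun c u' := fun he => hne2 (hinj _ huc _ hu'c he)
    have hsr2 : sfun c u ∈ c.rotate m2 := by
      rw [List.mem_rotate]
      exact hsfc u huc
    set j := (c.rotate m2).idxOf (sfun c u) with hj
    have hjlt : j < (c.rotate m2).length := List.idxOf_lt_length_iff.mpr hsr2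
    have hr2ne : c.rotate m2 ≠ [] := by
      rw [Ne, List.rotate_eq_nil_iff]; exact hcne
    have hjpos : 0 < j := by
      obtain ⟨x2, t2, hx2⟩ := List.exists_cons_of_ne_nil hr2ne
      have hx2h : x2 = sfun c u' := by
        rw [hx2] at hh2; simpa using hh2
      rw [hj, hx2, hx2h, List.idxOf_cons_ne _ (Ne.symm hss')]
      omega
    have hheadj : ((c.rotate m2).rotate j).head? = some (sfun c u) := by
      rw [head?_rotate hjlt, List.getElem?_eq_getElem hjlt]
      congr 1
      exact List.getElem_idxOf hjlt
    have hr1eq : c.rotate m1 = (c.rotate m2).rotate j := by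
      rw [List.rotate_rotate]
      apply rotate_eq_rotate_of_head?_eq hcyc.2.1 hcne
      rw [hh1, ← List.rotate_rotate, hheadj]
    set B := (c.rotate m2).drop j with hB
    set A := (c.rotate m2).take j with hA
    have hBA : c.rotate m1 = B ++ A := by
      rw [hr1eq, List.rotate_eq_drop_append_take hjlt.le]
    have hBne : B ≠ [] := by
      rw [hB, Ne, List.drop_eq_nil_iff]
      omega
    have hAne : A ≠ [] := by
      rw [hA, Ne, List.take_eq_nil_iff]
      push_neg
      exact ⟨by omega, hr2ne⟩
    have hBh : B.head? = some (sfun c u) := by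
      rw [hB, List.head?_drop, List.getElem?_eq_getElem hjlt, List.getElem_idxOf hjlt]
    have hBl : B.getLast? = some u' := by
      have hsplit : c.rotate m2 = A ++ B := (List.take_append_drop j (c.rotate m2)).symm
      rw [hsplit, List.getLast?_append_of_ne_nil _ hBne] at hl2
      exact hl2
    have hAh : A.head? = some (sfun c u') := by
      obtain ⟨x2, t2, hx2⟩ := List.exists_cons_of_ne_nil hr2ne
      have hx2h : x2 = sfun c u' := by
        rw [hx2] at hh2; simpa using hh2
      obtain ⟨j', hj'⟩ : ∃ j', j = j' + 1 := ⟨j - 1, by omega⟩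
      rw [hA, hx2, hj', List.take_succ_cons, List.head?_cons, hx2h]
    have hAl : A.getLast? = some u := by
      rw [hBA, List.getLast?_append_of_ne_nil _ hAne] at hl1
      exact hl1
    obtain ⟨q, hq1, hq2, hq3, hq4, hq5, hq6⟩ := hHpath h hh h' hh'
    refine surgery2 hmax (hBA ▸ hcyc.rotate m1) (by rw [← hBA, List.length_rotate, hclen])
      hAne hBne hBh hBl hAh hAl hadj hq1 hq2 hq3 hq4 hq5 huh hu'h'.symm ?_
    intro x hx hx2
    rw [← hBA, List.mem_rotate] at hx2
    exact hHc x (hq6 x hx) hx2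
  -- assemble the independent set
  set F := insert v (U.image (sfun c)) with hF
  have hvimg : v ∉ U.image (sfun c) := by
    rw [Finset.mem_image]
    rintro ⟨u, huU, heq⟩
    exact hv (heq ▸ hsfc u (hUc u huU).1)
  refine ⟨F, ?_, ?_⟩
  · have himg : (U.image (sfun c)).card = U.card :=
      Finset.card_image_of_injOn (fun a ha b hb he => hinj a (hUc a ha).1 b (hUc b hb).1 he)
    rw [hF, Finset.card_insert_of_notMem hvimg, himg]
    omega
  · intro a ha b hb hab
    simp only [hF, Finset.coe_insert, Set.mem_insert_iff, Finset.coe_image, Set.mem_image,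
      Finset.mem_coe] at ha hb
    rcases ha with rfl | ⟨u, huU, rfl⟩ <;> rcases hb with rfl | ⟨u', hu'U, rfl⟩
    · exact absurd rfl hab
    · intro hadj
      exact hS1 u' (hUc u' hu'U).1 (hUc u' hu'U).2 a hvH hadj.symm
    · intro hadj
      exact hS1 u (hUc u huU).1 (hUc u huU).2 b hvH hadj
    · have hne2 : u ≠ u' := fun he => hab (he ▸ rfl)
      exact hS2 u huU u' hu'U hne2

lemma colorable_of_indep (G : SimpleGraph V) (s : Finset V)
    (hs : (s : Set V).Pairwise fun a b => ¬ G.Adj a b) :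
    G.Colorable (Fintype.card V - s.card + 1) := by
  classical
  have hcolor : G.Coloring (Option {x : V // x ∉ s}) := by
    refine SimpleGraph.Coloring.mk (fun v => if h : v ∈ s then none else some ⟨v, h⟩) ?_
    intro a b hadj
    by_cases ha : a ∈ s <;> by_cases hb : b ∈ s <;> simp only [ha, hb, dif_pos, dif_neg,
      not_false_iff, Ne, Option.some.injEq, reduceCtorEq]
    · exact absurd hadj (hs ha hb hadj.ne)
    · intro hcontra
      exact hadj.ne (congrArg Subtype.val hcontra)
  have hcardeq : Fintype.card (Option {x : V // x ∉ s}) = Fintype.card V - s.card + 1 := by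
    rw [Fintype.card_option]
    congr 1
    rw [Fintype.card_subtype_compl, Fintype.card_coe]
  exact hcardeq ▸ hcolor.colorable

end CEAux

theorem stmt16' {V : Type*} [Fintype V] [DecidableEq V] (G : SimpleGraph V) (k : ℕ)
    (hk : 2 ≤ k)
    (hcard : k < Fintype.card V)
    (hcut : ∀ S : Finset V, S.card < k → (G.induce ((↑S : Set V)ᶜ)).Connected)
    (hchi : ((Fintype.card V - k : ℕ) : ℕ∞) ≤ G.chromaticNumber)
    (hham : ¬ G.IsHamiltonian) :
    2 * k + 1 ≤ Fintype.card V ∧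
      G.chromaticNumber = ((Fintype.card V - k : ℕ) : ℕ∞) ∧
      sSup {n | ∃ s : Finset V, s.card = n ∧ (s : Set V).Pairwise fun a b => ¬ G.Adj a b} = k + 1 := by
  classical
  obtain ⟨F, hFcard, hFind⟩ := CEAux.key G k hk hcard hcut hham
  have hub : ∀ s : Finset V, (s : Set V).Pairwise (fun a b => ¬ G.Adj a b) → s.card ≤ k + 1 := by
    intro s hs
    have hcol := CEAux.colorable_of_indep G s hs
    have hchrom := hcol.chromaticNumber_le
    have hcombined : ((Fintype.card V - k : ℕ) : ℕ∞) ≤ ((Fintype.card V - s.card + 1 : ℕ) : ℕ∞) :=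
      le_trans hchi hchrom
    have hnat : Fintype.card V - k ≤ Fintype.card V - s.card + 1 := by
      exact_mod_cast hcombined
    have hscard : s.card ≤ Fintype.card V := Finset.card_le_univ s
    omega
  obtain ⟨s, hsF, hscard⟩ := Finset.exists_subset_card_eq (s := F) (n := k + 1) (by omega)
  have hsind : (s : Set V).Pairwise fun a b => ¬ G.Adj a b :=
    hFind.mono (Finset.coe_subset.mpr hsF)
  have hdeg := CEAux.mindeg G k hcard hcut
  refine ⟨?_, ?_, ?_⟩
  · -- 2k+1 ≤ n
    obtain ⟨v₀, hv₀⟩ := Finset.card_pos.mp (by omega : 0 < s.card)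
    obtain ⟨N, hN1, hN2⟩ := hdeg v₀
    have hdisj : Disjoint s N := by
      rw [Finset.disjoint_left]
      intro x hxs hxN
      have hadj : G.Adj v₀ x := hN2 x hxN
      exact hsind hv₀ hxs hadj.ne hadj
    have := Finset.card_le_univ (s ∪ N)
    rw [Finset.card_union_of_disjoint hdisj] at this
    omega
  · -- chromatic number
    refine le_antisymm ?_ hchi
    have hcol := CEAux.colorable_of_indep G s hsind
    have hchrom := hcol.chromaticNumber_le
    have heq : Fintype.card V - s.card + 1 = Fintype.card V - k := by
      rw [hscard]; omega
    rwa [heq] at hchrom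
  · refine le_antisymm ?_ ?_
    · refine csSup_le ⟨k + 1, s, hscard, hsind⟩ ?_
      rintro m ⟨t, htcard, htp⟩
      exact htcard ▸ hub t htp
    · refine le_csSup ⟨k + 1, ?_⟩ ⟨s, hscard, hsind⟩
      rintro m ⟨t, htcard, htp⟩
      exact htcard ▸ hub t htp


end CEProof

theorem stmt16 {V : Type*} [Fintype V] [DecidableEq V] (G : SimpleGraph V) (k : ℕ)
    (hk : 2 ≤ k) (hconn : G.IsKConnected k)
    (hchi : ((Fintype.card V - k : ℕ) : ℕ∞) ≤ G.chromaticNumber)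
    (hham : ¬ G.IsHamiltonian) :
    2 * k + 1 ≤ Fintype.card V ∧
      G.chromaticNumber = ((Fintype.card V - k : ℕ) : ℕ∞) ∧
      G.indepNum' = k + 1 := by
  obtain ⟨hcard, hcut⟩ := hconn
  obtain ⟨h1, h2, h3⟩ := stmt16' G k hk hcard hcut hchi hham
  exact ⟨h1, h2, h3⟩
end
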